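/- Fix a 4-list assignment (ℓ_i)_{i≥1} and for each n let T_n be the set of square-free words of length n respecting it. Let β > 1 be a real number such that 1 + √3 − 1/(β(β−1)) ≥ β. Then for every n ≥ 3, the weighted count satisfies T̂_{n+1} ≥ β · T̂_n, where for a set S of words of length ≥ 3, Ŝ = (number of perfect words in S) + (√3 − 1)·(number of nice words in S). -/

import Mathlib

/-- A word is square-free if no factor of it is a square `u ++ u` with `u` nonempty. -/
def SquareFree {α : Type*} (w : List α) : Prop :=
  ∀ u : List α, u ≠ [] → ¬ (u ++ u) <:+: w

/-- A word `w` respects the list assignment `ℓ` if its `i`-th letter belongs to `ℓ i`. -/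
def Respects {α : Type*} (ℓ : ℕ → Finset α) (w : List α) : Prop :=
  ∀ (i : ℕ) (h : i < w.length), w[i] ∈ ℓ i

/-- A word is perfect if its suffix of length 3 consists of three pairwise distinct letters. -/
def PerfectWord {α : Type*} (w : List α) : Prop :=
  ∃ a b c : α, a ≠ b ∧ a ≠ c ∧ b ≠ c ∧ [a, b, c] <:+ w

/-- A word is nice if its suffix of length 3 is of the form `aba` with `a ≠ b`. -/
def NiceWord {α : Type*} (w : List α) : Prop :=
  ∃ a b : α, a ≠ b ∧ [a, b, a] <:+ w

/-- The weighted count of a set of words: the number of perfect words plus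
`√3 - 1` times the number of nice words. -/
noncomputable def hatCount {α : Type*} (S : Set (List α)) : ℝ :=
  ({w ∈ S | PerfectWord w}.ncard : ℝ) + (Real.sqrt 3 - 1) * ({w ∈ S | NiceWord w}.ncard : ℝ)

noncomputable def lam : ℝ := Real.sqrt 3 - 1

lemma lam_nonneg : 0 ≤ lam := by
  have : (1:ℝ) ≤ Real.sqrt 3 := by
    nlinarith [Real.sq_sqrt (by norm_num : (3:ℝ) ≥ 0), Real.sqrt_nonneg 3]
  unfold lam; linarith

lemma lam_le_one : lam ≤ 1 := by
  have : Real.sqrt 3 ≤ 2 := by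
    nlinarith [Real.sq_sqrt (by norm_num : (3:ℝ) ≥ 0), Real.sqrt_nonneg 3]
  unfold lam; linarith

/-- last three letters -/
def last3 {α : Type*} (v : List α) : List α := v.drop (v.length - 3)

lemma suffix_unique {α : Type*} {s t v : List α} (hs : s <:+ v) (ht : t <:+ v)
    (h : s.length = t.length) : s = t := by
  obtain ⟨a, rfl⟩ := hs
  obtain ⟨b, hb⟩ := ht
  exact ((List.append_inj' hb h.symm).2).symm

lemma last3_suffix {α : Type*} (v : List α) : last3 v <:+ v := List.drop_suffix _ _

lemma last3_length {α : Type*} {v : List α} (h : 3 ≤ v.length) : (last3 v).length = 3 := by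
  simp [last3]; omega

lemma suffix3_iff {α : Type*} {v : List α} {a b c : α} :
    [a, b, c] <:+ v ↔ last3 v = [a, b, c] := by
  constructor
  · intro h
    have h3 : 3 ≤ v.length := h.length_le
    exact suffix_unique (last3_suffix v) h (by rw [last3_length h3]; rfl)
  · intro h; rw [← h]; exact last3_suffix v

lemma perfect_iff_last3 {α : Type*} {v : List α} :
    PerfectWord v ↔ ∃ a b c : α, a ≠ b ∧ a ≠ c ∧ b ≠ c ∧ last3 v = [a, b, c] := by
  unfold PerfectWord; simp_rw [suffix3_iff]

lemma nice_iff_last3 {α : Type*} {v : List α} :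
    NiceWord v ↔ ∃ a b : α, a ≠ b ∧ last3 v = [a, b, a] := by
  unfold NiceWord; simp_rw [suffix3_iff]

lemma nice_not_perfect {α : Type*} {v : List α} (h : NiceWord v) : ¬ PerfectWord v := by
  rw [nice_iff_last3] at h
  rw [perfect_iff_last3]
  obtain ⟨a, b, hab, h3⟩ := h
  rintro ⟨a', b', c', h1, h2, h3', h4⟩
  rw [h3] at h4
  simp at h4
  obtain ⟨rfl, rfl, rfl⟩ := h4
  exact h2 rfl

open Classical in
/-- weight of a word -/
noncomputable def wt {α : Type*} (v : List α) : ℝ :=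
  if PerfectWord v then 1 else if NiceWord v then lam else 0

lemma wt_nonneg {α : Type*} (v : List α) : 0 ≤ wt v := by
  unfold wt; split_ifs <;> simp [lam_nonneg]

lemma wt_le_one {α : Type*} (v : List α) : wt v ≤ 1 := by
  unfold wt; split_ifs <;> simp [lam_le_one, lam_nonneg]

lemma wt_perfect {α : Type*} {v : List α} (h : PerfectWord v) : wt v = 1 := by
  simp [wt, h]

lemma wt_nice {α : Type*} {v : List α} (h : NiceWord v) : wt v = lam := by
  simp [wt, nice_not_perfect h, h]

/-- wt depends only on last3 when lengths ≥ 3 -/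
lemma wt_congr {α : Type*} {v w : List α} (h : last3 v = last3 w) : wt v = wt w := by
  unfold wt
  rw [perfect_iff_last3, perfect_iff_last3, nice_iff_last3, nice_iff_last3, h]

lemma wt_short {α : Type*} {v : List α} (h : v.length < 3) : wt v = 0 := by
  have hp : ¬ PerfectWord v := by
    rintro ⟨a,b,c,_,_,_,hs⟩; have := hs.length_le; simp at this; omega
  have hn : ¬ NiceWord v := by
    rintro ⟨a,b,_,hs⟩; have := hs.length_le; simp at this; omega
  simp [wt, hp, hn]

section Words
variable (ℓ : ℕ → Finset ℕ)

/-- all words of length n respecting ℓ -/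
noncomputable def allWords : ℕ → Finset (List ℕ)
  | 0 => {[]}
  | n + 1 => (allWords n ×ˢ ℓ n).image (fun q => q.1 ++ [q.2])

lemma respects_concat {w : List ℕ} {x : ℕ} {n : ℕ} (hw : w.length = n)
    (hr : Respects ℓ w) (hx : x ∈ ℓ n) : Respects ℓ (w ++ [x]) := by
  intro i hi
  simp at hi
  rcases lt_or_ge i w.length with h | h
  · rw [List.getElem_append_left h]; exact hr i h
  · have : i = w.length := by omega
    subst this
    rw [List.getElem_append_right le_rfl]
    simpa [hw] using hx

lemma respects_take {w : List ℕ} (hr : Respects ℓ w) (k : ℕ) : Respects ℓ (w.take k) := by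
  intro i hi
  rw [List.getElem_take]
  exact hr i (lt_of_lt_of_le hi (by simp))

lemma mem_allWords {n : ℕ} {w : List ℕ} :
    w ∈ allWords ℓ n ↔ w.length = n ∧ Respects ℓ w := by
  induction n generalizing w with
  | zero =>
    simp only [allWords, Finset.mem_singleton]
    constructor
    · rintro rfl; exact ⟨rfl, by intro i hi; simp at hi⟩
    · rintro ⟨h, _⟩; exact List.length_eq_zero_iff.mp h
  | succ n ih =>
    simp only [allWords, Finset.mem_image, Finset.mem_product, Prod.exists]
    constructor
    · rintro ⟨u, x, ⟨hu, hx⟩, rfl⟩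
      obtain ⟨hlen, hr⟩ := ih.mp hu
      exact ⟨by simp [hlen], respects_concat ℓ hlen hr hx⟩
    · rintro ⟨hlen, hr⟩
      have hne : w ≠ [] := by intro h; subst h; simp at hlen
      refine ⟨w.dropLast, w.getLast hne, ⟨?_, ?_⟩, ?_⟩
      · apply ih.mpr
        constructor
        · simp [hlen]
        · rw [List.dropLast_eq_take]; exact respects_take ℓ hr _
      · have : w.dropLast ++ [w.getLast hne] = w := List.dropLast_append_getLast hne
        have h2 := hr n (by omega)
        have h3 : w.getLast hne = w[n]'(by omega) := by
          rw [List.getLast_eq_getElem]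
          simp [hlen]
        rw [h3]; exact h2
      · exact List.dropLast_append_getLast hne
end Words

open Classical in
/-- square-free words of length n respecting ℓ, as a Finset -/
noncomputable def SF (ℓ : ℕ → Finset ℕ) (n : ℕ) : Finset (List ℕ) :=
  (allWords ℓ n).filter SquareFree

lemma mem_SF {ℓ : ℕ → Finset ℕ} {n : ℕ} {w : List ℕ} :
    w ∈ SF ℓ n ↔ w.length = n ∧ SquareFree w ∧ Respects ℓ w := by
  simp [SF, mem_allWords]; tauto

noncomputable def hat (ℓ : ℕ → Finset ℕ) (n : ℕ) : ℝ := ∑ w ∈ SF ℓ n, wt w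

lemma hat_nonneg (ℓ : ℕ → Finset ℕ) (n : ℕ) : 0 ≤ hat ℓ n :=
  Finset.sum_nonneg fun w _ => wt_nonneg w

open Classical in
lemma hat_eq_hatCount (ℓ : ℕ → Finset ℕ) (n : ℕ) :
    hatCount {w : List ℕ | w.length = n ∧ SquareFree w ∧ Respects ℓ w} = hat ℓ n := by
  have hset : {w : List ℕ | w.length = n ∧ SquareFree w ∧ Respects ℓ w} = ↑(SF ℓ n) := by
    ext w; simp [mem_SF]
  rw [hatCount, hset]
  have h1 : {w ∈ (↑(SF ℓ n) : Set (List ℕ)) | PerfectWord w} =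
      ↑((SF ℓ n).filter PerfectWord) := by ext w; simp
  have h2 : {w ∈ (↑(SF ℓ n) : Set (List ℕ)) | NiceWord w} =
      ↑((SF ℓ n).filter NiceWord) := by ext w; simp
  rw [h1, h2, Set.ncard_coe_finset, Set.ncard_coe_finset]
  rw [hat]
  rw [← Finset.sum_filter_add_sum_filter_not (SF ℓ n) PerfectWord wt]
  have e1 : ∑ w ∈ (SF ℓ n).filter PerfectWord, wt w
      = ((SF ℓ n).filter PerfectWord).card • (1:ℝ) := by
    rw [Finset.sum_congr rfl (fun w hw => wt_perfect (Finset.mem_filter.mp hw).2)]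
    simp
  have e2 : ∑ w ∈ (SF ℓ n).filter (fun w => ¬ PerfectWord w), wt w
      = ((SF ℓ n).filter NiceWord).card • lam := by
    have hfil : (SF ℓ n).filter NiceWord
        = ((SF ℓ n).filter (fun w => ¬ PerfectWord w)).filter NiceWord := by
      ext w
      simp only [Finset.mem_filter, and_assoc]
      constructor
      · rintro ⟨h1, h2⟩; exact ⟨h1, nice_not_perfect h2, h2⟩
      · rintro ⟨h1, _, h3⟩; exact ⟨h1, h3⟩
    rw [← Finset.sum_filter_add_sum_filter_not ((SF ℓ n).filter (fun w => ¬ PerfectWord w))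
      NiceWord wt]
    have z : ∑ w ∈ ((SF ℓ n).filter (fun w => ¬ PerfectWord w)).filter
        (fun w => ¬ NiceWord w), wt w = 0 := by
      apply Finset.sum_eq_zero
      intro w hw
      simp only [Finset.mem_filter] at hw
      simp [wt, hw.1.2, hw.2]
    rw [z, add_zero, ← hfil]
    rw [Finset.sum_congr rfl (fun w hw => wt_nice (Finset.mem_filter.mp hw).2)]
    simp
  rw [e1, e2]
  simp [lam]
  ring

lemma sf_take {w : List ℕ} (h : SquareFree w) (k : ℕ) : SquareFree (w.take k) :=
  fun u hu hinf => h u hu (hinf.trans (w.take_prefix k).isInfix)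

lemma exists_square_suffix {v : List ℕ} (hv : ¬ SquareFree v) (hd : SquareFree v.dropLast) :
    ∃ u : List ℕ, u ≠ [] ∧ u ++ u <:+ v := by
  unfold SquareFree at hv
  push_neg at hv
  obtain ⟨u, hu, s, t, hst⟩ := hv
  rcases eq_or_ne t [] with rfl | ht
  · exact ⟨u, hu, s, by simpa using hst⟩
  · exfalso
    apply hd u hu
    refine ⟨s, t.dropLast, ?_⟩
    rw [← hst]
    rw [List.dropLast_append_of_ne_nil ht]

/-- suffix of a suffix by length -/
lemma suffix_of_suffix_le {s t v : List ℕ} (hs : s <:+ v) (ht : t <:+ v)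
    (h : s.length ≤ t.length) : s <:+ t := by
  obtain ⟨a, rfl⟩ := hs
  obtain ⟨b, hb⟩ := ht
  have hb' : b ++ t = a ++ s := hb
  have hlen : b.length ≤ a.length := by
    have := congrArg List.length hb'
    simp at this; omega
  obtain ⟨c, hc⟩ : b <+: a := by
    have : b <+: a ++ s := ⟨t, hb'⟩
    exact List.prefix_of_prefix_length_le this (a.prefix_append s) hlen
  refine ⟨c, ?_⟩
  subst hc
  rw [List.append_assoc] at hb'
  exact ((List.append_right_injective b) hb').symm

/-- last two letters of a square-free word of length ≥ 2 are distinct -/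
lemma last_two {w : List ℕ} (hsf : SquareFree w) (h2 : 2 ≤ w.length) :
    ∃ y z : ℕ, y ≠ z ∧ w.drop (w.length - 2) = [y, z] := by
  have hlen : (w.drop (w.length - 2)).length = 2 := by simp; omega
  obtain ⟨y, z, hyz⟩ := List.length_eq_two.mp hlen
  refine ⟨y, z, ?_, hyz⟩
  rintro rfl
  have hs : w.drop (w.length - 2) <:+ w := List.drop_suffix _ _
  rw [hyz] at hs
  exact hsf [y] (by simp) hs.isInfix

lemma last3_concat {w : List ℕ} (x : ℕ) (h2 : 2 ≤ w.length) :
    last3 (w ++ [x]) = w.drop (w.length - 2) ++ [x] := by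
  unfold last3
  have h1 : (w ++ [x]).length - 3 = w.length - 2 := by simp
  have h0 : w.length - 2 - w.length = 0 := by omega
  rw [h1, List.drop_append, h0, List.drop_zero]

lemma wt_eq_zero_of_last3_aab {v : List ℕ} {c a : ℕ} (h : last3 v = [c, a, a]) :
    wt v = 0 := by
  have hp : ¬ PerfectWord v := by
    rw [perfect_iff_last3, h]
    rintro ⟨a', b', c', h1, h2, h3, h4⟩
    simp at h4
    obtain ⟨rfl, rfl, rfl⟩ := h4
    exact h3 rfl
  have hn : ¬ NiceWord v := by
    rw [nice_iff_last3, h]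
    rintro ⟨a', b', h1, h4⟩
    simp at h4
    obtain ⟨rfl, rfl, h5⟩ := h4
    exact h1 h5.symm
  simp [wt, hp, hn]

/-- squares at a given period -/
def SqAt (v : List ℕ) (p : ℕ) : Prop := ∃ u : List ℕ, u.length = p ∧ u ≠ [] ∧ u ++ u <:+ v

noncomputable def minp (v : List ℕ) : ℕ := sInf {p | SqAt v p}

lemma sqAt_minp {v : List ℕ} (h : ∃ p, SqAt v p) : SqAt v (minp v) := Nat.sInf_mem h

lemma minp_le {v : List ℕ} {p : ℕ} (h : SqAt v p) : minp v ≤ p := Nat.sInf_le h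

lemma not_sqAt_zero (v : List ℕ) : ¬ SqAt v 0 := by
  rintro ⟨u, hlen, hne, _⟩
  exact hne (List.length_eq_zero_iff.mp hlen)

lemma minp_pos {v : List ℕ} (h : ∃ p, SqAt v p) : 1 ≤ minp v := by
  rcases Nat.eq_zero_or_pos (minp v) with h0 | h1
  · exact absurd (h0 ▸ sqAt_minp h) (not_sqAt_zero v)
  · exact h1

lemma minp_le_len {v : List ℕ} (h : ∃ p, SqAt v p) : minp v ≤ v.length := by
  obtain ⟨u, hlen, hne, hsuf⟩ := sqAt_minp h
  have := hsuf.length_le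
  simp at this
  omega

/-- period-1 squares make weight zero -/
lemma wt_zero_of_minp_one {v : List ℕ} (h : ∃ p, SqAt v p) (h1 : minp v = 1)
    (h3 : 3 ≤ v.length) : wt v = 0 := by
  obtain ⟨u, hlen, hne, hsuf⟩ := sqAt_minp h
  rw [h1] at hlen
  obtain ⟨a, rfl⟩ := List.length_eq_one_iff.mp hlen
  have haa : [a, a] <:+ last3 v := by
    apply suffix_of_suffix_le hsuf (last3_suffix v)
    rw [last3_length h3]; simp
  obtain ⟨r, hr⟩ := haa
  have hrlen : r.length = 1 := by
    have := congrArg List.length hr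
    rw [last3_length h3] at this
    simp at this; omega
  obtain ⟨c, rfl⟩ := List.length_eq_one_iff.mp hrlen
  exact wt_eq_zero_of_last3_aab (show last3 v = [c, a, a] from hr.symm)

/-- structure at minimal period 2 -/
lemma minp_two_struct {v : List ℕ} (h : ∃ p, SqAt v p) (h2 : minp v = 2) :
    ∃ a b : ℕ, a ≠ b ∧ ∃ s : List ℕ, v = s ++ [a, b, a, b] := by
  obtain ⟨u, hlen, hne, hsuf⟩ := sqAt_minp h
  rw [h2] at hlen
  obtain ⟨a, b, rfl⟩ := List.length_eq_two.mp hlen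
  refine ⟨a, b, ?_, ?_⟩
  · rintro rfl
    have : SqAt v 1 := ⟨[a], rfl, by simp, (show [a] ++ [a] <:+ [a,a]++[a,a] from ⟨[a,a], rfl⟩).trans hsuf⟩
    have := minp_le this
    omega
  · obtain ⟨s, hs⟩ := hsuf
    exact ⟨s, by simpa using hs.symm⟩

lemma nice_dropLast_of_abab {v : List ℕ} {a b : ℕ} {s : List ℕ} (hab : a ≠ b)
    (hv : v = s ++ [a, b, a, b]) : NiceWord v.dropLast := by
  have : v.dropLast = s ++ [a, b, a] := by
    rw [hv, List.dropLast_append_of_ne_nil (l := [a, b, a, b]) (by simp)]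
    rfl
  exact ⟨a, b, hab, by rw [this]; exact ⟨s, rfl⟩⟩

lemma wt_lam_of_abab {v : List ℕ} {a b : ℕ} {s : List ℕ} (hab : a ≠ b)
    (hv : v = s ++ [a, b, a, b]) : wt v = lam := by
  apply wt_nice
  exact ⟨b, a, hab.symm, by rw [hv]; exact ⟨s ++ [a], by simp⟩⟩

lemma last3_dropLast_of_abab {v : List ℕ} {a b : ℕ} {s : List ℕ}
    (hv : v = s ++ [a, b, a, b]) : last3 v.dropLast = [a, b, a] := by
  have : v.dropLast = s ++ [a, b, a] := by
    rw [hv, List.dropLast_append_of_ne_nil (l := [a, b, a, b]) (by simp)]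
    rfl
  rw [← suffix3_iff, this]
  exact ⟨s, rfl⟩

lemma last3_of_suffix {t v : List ℕ} (h : t <:+ v) (h3 : 3 ≤ t.length) :
    last3 v = last3 t := by
  apply suffix_unique (last3_suffix v) ((last3_suffix t).trans h)
  rw [last3_length (le_trans h3 h.length_le), last3_length h3]

/-- structure at period p : decomposition and reconstruction -/
lemma sq_struct {v : List ℕ} {p : ℕ} (hp : SqAt v p) :
    v.take (v.length - p) ++ (v.take (v.length - p)).drop (v.length - 2 * p) = v ∧
    (3 ≤ p → last3 (v.take (v.length - p)) = last3 v) := by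
  obtain ⟨u, hlen, hne, s, hs⟩ := hp
  have hv : v = (s ++ u) ++ u := by rw [← hs]; simp
  have hvlen : v.length = s.length + 2 * p := by rw [hv]; simp; omega
  have hy : v.take (v.length - p) = s ++ u := by
    rw [hv, List.take_append,
      List.take_of_length_le (by simp [hlen]; omega : (s++u).length ≤ (s++u++u).length - p),
      List.take_eq_nil_iff.mpr (Or.inl (by simp [hlen]; omega))]
    simp
  constructor
  · rw [hy]
    have : (s ++ u).drop (v.length - 2 * p) = u := by
      have e3 : v.length - 2 * p = s.length := by omega
      rw [e3, List.drop_append]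
      simp
    rw [this, ← hv]
  · intro h3
    rw [hy]
    have hu1 : last3 v = last3 u :=
      last3_of_suffix ((show u <:+ u ++ u from ⟨u, rfl⟩).trans ⟨s, hs⟩) (by omega)
    have hu2 : last3 (s ++ u) = last3 u := last3_of_suffix ⟨s, rfl⟩ (by omega)
    rw [hu1, hu2]

open Classical

lemma sum_ext {ℓ : ℕ → Finset ℕ} {n : ℕ} (h4 : (ℓ n).card = 4) {w : List ℕ}
    (hsf : SquareFree w) (hlen : w.length = n) (hn : 2 ≤ n) :
    2 + lam ≤ ∑ x ∈ ℓ n, wt (w ++ [x]) := by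
  obtain ⟨y, z, hyz, hd⟩ := last_two hsf (by omega)
  have hlast3 : ∀ x : ℕ, last3 (w ++ [x]) = [y, z, x] := by
    intro x
    rw [last3_concat x (by omega), hd]
    rfl
  have wt1 : ∀ x : ℕ, x ≠ y → x ≠ z → wt (w ++ [x]) = 1 := by
    intro x hxy hxz
    exact wt_perfect (perfect_iff_last3.mpr ⟨y, z, x, hyz, (Ne.symm hxy), (Ne.symm hxz), hlast3 x⟩)
  have wty : wt (w ++ [y]) = lam :=
    wt_nice (nice_iff_last3.mpr ⟨y, z, hyz, hlast3 y⟩)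
  set A := (ℓ n).erase z with hA
  have hcardA : 3 ≤ A.card := by
    rw [hA]
    have := Finset.pred_card_le_card_erase (s := ℓ n) (a := z)
    omega
  have step1 : ∑ x ∈ A, wt (w ++ [x]) ≤ ∑ x ∈ ℓ n, wt (w ++ [x]) :=
    Finset.sum_le_sum_of_subset_of_nonneg (Finset.erase_subset _ _)
      (fun x _ _ => wt_nonneg _)
  have split := Finset.sum_filter_add_sum_filter_not A (fun x => x = y) (fun x => wt (w ++ [x]))
  set c := (A.filter (fun x => x = y)).card with hc
  set d := (A.filter (fun x => ¬ x = y)).card with hdd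
  have hcd : c + d = A.card := Finset.card_filter_add_card_filter_not _
  have hc1 : c ≤ 1 := by
    have : A.filter (fun x => x = y) ⊆ {y} := by
      intro x hx
      simp only [Finset.mem_filter] at hx
      simp [hx.2]
    simpa using Finset.card_le_card this
  have e1 : ∑ x ∈ A.filter (fun x => x = y), wt (w ++ [x]) = c * lam := by
    rw [Finset.sum_congr rfl (fun x hx => by
      rw [(Finset.mem_filter.mp hx).2, wty])]
    simp [mul_comm, hc]
  have e2 : ∑ x ∈ A.filter (fun x => ¬ x = y), wt (w ++ [x]) = d := by
    rw [Finset.sum_congr rfl (fun x hx => by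
      have h := Finset.mem_filter.mp hx
      have hxz : x ≠ z := Finset.ne_of_mem_erase (hA ▸ h.1)
      rw [wt1 x h.2 hxz])]
    simp [hdd]
  have : (2:ℝ) + lam ≤ ∑ x ∈ A, wt (w ++ [x]) := by
    rw [← split, e1, e2]
    have hcr : (c:ℝ) ≤ 1 := by exact_mod_cast hc1
    have hcdr : (c:ℝ) + d = A.card := by exact_mod_cast hcd
    have h3r : (3:ℝ) ≤ A.card := by exact_mod_cast hcardA
    nlinarith [lam_nonneg, lam_le_one]
  linarith

lemma perfect_or_nice {w : List ℕ} (hsf : SquareFree w) (h3 : 3 ≤ w.length) :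
    PerfectWord w ∨ NiceWord w := by
  have hl3 : (last3 w).length = 3 := last3_length h3
  obtain ⟨c, y, z, hcyz⟩ := List.length_eq_three.mp hl3
  have hsuf : [c, y, z] <:+ w := hcyz ▸ last3_suffix w
  have hyz : y ≠ z := by
    rintro rfl
    exact hsf [y] (by simp)
      (((show [y] ++ [y] <:+ [c,y,y] from ⟨[c], rfl⟩).trans hsuf).isInfix)
  have hcy : c ≠ y := by
    rintro rfl
    exact hsf [c] (by simp)
      ((List.IsInfix.trans (show [c] ++ [c] <:+: [c,c,z] from ⟨[], [z], rfl⟩) hsuf.isInfix))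
  by_cases hcz : c = z
  · right
    exact ⟨c, y, hcy, by rw [hcz] at hsuf ⊢; exact hsuf⟩
  · left
    exact ⟨c, y, z, hcy, hcz, hyz, hsuf⟩

lemma hat_PN (ℓ : ℕ → Finset ℕ) (n : ℕ) :
    hat ℓ n = ((SF ℓ n).filter PerfectWord).card
      + lam * ((SF ℓ n).filter NiceWord).card := by
  rw [hat]
  rw [← Finset.sum_filter_add_sum_filter_not (SF ℓ n) PerfectWord wt]
  have e1 : ∑ w ∈ (SF ℓ n).filter PerfectWord, wt w
      = (((SF ℓ n).filter PerfectWord).card : ℝ) := by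
    rw [Finset.sum_congr rfl (fun w hw => wt_perfect (Finset.mem_filter.mp hw).2)]
    simp
  have hfil : (SF ℓ n).filter NiceWord
      = ((SF ℓ n).filter (fun w => ¬ PerfectWord w)).filter NiceWord := by
    ext w
    simp only [Finset.mem_filter, and_assoc]
    constructor
    · rintro ⟨h1, h2⟩; exact ⟨h1, nice_not_perfect h2, h2⟩
    · rintro ⟨h1, _, h3⟩; exact ⟨h1, h3⟩
  have e2 : ∑ w ∈ (SF ℓ n).filter (fun w => ¬ PerfectWord w), wt w
      = lam * (((SF ℓ n).filter NiceWord).card : ℝ) := by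
    rw [← Finset.sum_filter_add_sum_filter_not ((SF ℓ n).filter (fun w => ¬ PerfectWord w))
      NiceWord wt]
    have z : ∑ w ∈ ((SF ℓ n).filter (fun w => ¬ PerfectWord w)).filter
        (fun w => ¬ NiceWord w), wt w = 0 := by
      apply Finset.sum_eq_zero
      intro w hw
      simp only [Finset.mem_filter] at hw
      simp [wt, hw.1.2, hw.2]
    rw [z, add_zero, ← hfil]
    rw [Finset.sum_congr rfl (fun w hw => wt_nice (Finset.mem_filter.mp hw).2)]
    simp [mul_comm]
  rw [e1, e2]

lemma card_PN {ℓ : ℕ → Finset ℕ} {n : ℕ} (hn : 3 ≤ n) :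
    (SF ℓ n).card = ((SF ℓ n).filter PerfectWord).card
      + ((SF ℓ n).filter NiceWord).card := by
  rw [← Finset.card_filter_add_card_filter_not (s := SF ℓ n) (p := PerfectWord)]
  congr 1
  apply Finset.card_bij (fun w _ => w)
  · intro w hw
    simp only [Finset.mem_filter] at *
    obtain ⟨hw1, hw2⟩ := hw
    obtain ⟨hl, hsf, _⟩ := mem_SF.mp hw1
    rcases perfect_or_nice hsf (by omega) with h | h
    · exact absurd h hw2
    · exact ⟨hw1, h⟩
  · intro w _ w' _ h
    exact h
  · intro w hw
    simp only [Finset.mem_filter] at *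
    exact ⟨w, ⟨hw.1, nice_not_perfect hw.2⟩, rfl⟩

lemma getLast_mem_list {ℓ : ℕ → Finset ℕ} {v : List ℕ} {n : ℕ} (hl : v.length = n + 1)
    (hr : Respects ℓ v) (hne : v ≠ []) : v.getLast hne ∈ ℓ n := by
  have h2 := hr n (by omega)
  have h3 : v.getLast hne = v[n]'(by omega) := by
    rw [List.getLast_eq_getElem]
    simp [hl]
  rw [h3]; exact h2

lemma dropLast_mem_SF {ℓ : ℕ → Finset ℕ} {v : List ℕ} {n : ℕ} (hl : v.length = n + 1)
    (hsf : SquareFree v.dropLast) (hr : Respects ℓ v) : v.dropLast ∈ SF ℓ n := by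
  refine mem_SF.mpr ⟨by simp [hl], hsf, ?_⟩
  rw [List.dropLast_eq_take]
  exact respects_take ℓ hr _

lemma master (ℓ : ℕ → Finset ℕ) (h4 : ∀ i, (ℓ i).card = 4) {n : ℕ} (hn : 3 ≤ n) :
    (1 + Real.sqrt 3) * hat ℓ n - ∑ p ∈ Finset.Icc 3 (n+1), hat ℓ (n+1-p) ≤ hat ℓ (n+1) := by
  classical
  set G : Finset (List ℕ) := (SF ℓ n ×ˢ ℓ n).image (fun q => q.1 ++ [q.2]) with hG
  have memG : ∀ v : List ℕ, v ∈ G ↔ ∃ w x, w ∈ SF ℓ n ∧ x ∈ ℓ n ∧ v = w ++ [x] := by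
    intro v
    simp only [hG, Finset.mem_image, Finset.mem_product, Prod.exists]
    constructor
    · rintro ⟨w, x, ⟨hw, hx⟩, rfl⟩; exact ⟨w, x, hw, hx, rfl⟩
    · rintro ⟨w, x, hw, hx, rfl⟩; exact ⟨w, x, ⟨hw, hx⟩, rfl⟩
  have hSFsucc : SF ℓ (n+1) = G.filter SquareFree := by
    ext v
    rw [Finset.mem_filter, memG]
    constructor
    · intro hv
      obtain ⟨hl, hsf, hr⟩ := mem_SF.mp hv
      have hne : v ≠ [] := by intro h; rw [h] at hl; simp at hl
      have hdlsf : SquareFree v.dropLast := by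
        rw [List.dropLast_eq_take]; exact sf_take hsf _
      refine ⟨⟨v.dropLast, v.getLast hne, dropLast_mem_SF hl hdlsf hr,
        getLast_mem_list hl hr hne, (List.dropLast_append_getLast hne).symm⟩, hsf⟩
    · rintro ⟨⟨w, x, hw, hx, rfl⟩, hsf⟩
      obtain ⟨hl, _, hrw⟩ := mem_SF.mp hw
      exact mem_SF.mpr ⟨by simp [hl], hsf, respects_concat ℓ hl hrw hx⟩
  have injG : ∀ q1 ∈ SF ℓ n ×ˢ ℓ n, ∀ q2 ∈ SF ℓ n ×ˢ ℓ n,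
      (fun q : List ℕ × ℕ => q.1 ++ [q.2]) q1 = (fun q : List ℕ × ℕ => q.1 ++ [q.2]) q2 →
      q1 = q2 := by
    rintro ⟨w1, x1⟩ h1 ⟨w2, x2⟩ h2 h
    simp only [Finset.mem_product] at h1 h2
    have hl1 : w1.length = n := (mem_SF.mp h1.1).1
    have hl2 : w2.length = n := (mem_SF.mp h2.1).1
    obtain ⟨e1, e2⟩ := List.append_inj h (by rw [hl1, hl2])
    simp only at e2
    simp at e2
    exact Prod.ext e1 e2
  have sumG : ∑ v ∈ G, wt v = ∑ w ∈ SF ℓ n, ∑ x ∈ ℓ n, wt (w ++ [x]) := by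
    rw [hG, Finset.sum_image injG, Finset.sum_product]
  have sumG_ge : (2 + lam) * ((SF ℓ n).card : ℝ) ≤ ∑ v ∈ G, wt v := by
    rw [sumG]
    have : ∀ w ∈ SF ℓ n, 2 + lam ≤ ∑ x ∈ ℓ n, wt (w ++ [x]) := by
      intro w hw
      obtain ⟨hl, hsf, _⟩ := mem_SF.mp hw
      exact sum_ext (h4 n) hsf hl (by omega)
    calc (2 + lam) * ((SF ℓ n).card : ℝ) = ∑ _w ∈ SF ℓ n, (2 + lam) := by
          rw [Finset.sum_const, nsmul_eq_mul]; ring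
      _ ≤ _ := Finset.sum_le_sum this
  set Bad := G.filter (fun v => ¬ SquareFree v) with hBad
  have hsplit : ∑ v ∈ G, wt v = hat ℓ (n+1) + ∑ v ∈ Bad, wt v := by
    rw [hat, hSFsucc, hBad, ← Finset.sum_filter_add_sum_filter_not G SquareFree wt]
  have badFacts : ∀ v ∈ Bad, (∃ p, SqAt v p) ∧ v.length = n + 1 ∧ SquareFree v.dropLast
      ∧ Respects ℓ v := by
    intro v hv
    rw [hBad, Finset.mem_filter] at hv
    obtain ⟨hvG, hnsf⟩ := hv
    obtain ⟨w, x, hw, hx, rfl⟩ := (memG _).mp hvG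
    obtain ⟨hl, hsfw, hrw⟩ := mem_SF.mp hw
    have hdl : (w ++ [x]).dropLast = w := List.dropLast_concat ..
    have hdlsf : SquareFree (w ++ [x]).dropLast := by rw [hdl]; exact hsfw
    refine ⟨?_, by simp [hl], hdlsf, respects_concat ℓ hl hrw hx⟩
    obtain ⟨u, hu, hsuf⟩ := exists_square_suffix hnsf hdlsf
    exact ⟨u.length, u, rfl, hu, hsuf⟩
  have splitBad1 := Finset.sum_filter_add_sum_filter_not Bad (fun v => minp v = 1) wt
  have splitBad2 := Finset.sum_filter_add_sum_filter_not
    (Bad.filter (fun v => ¬ minp v = 1)) (fun v => minp v = 2) wt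
  have hB1 : ∑ v ∈ Bad.filter (fun v => minp v = 1), wt v = 0 := by
    apply Finset.sum_eq_zero
    intro v hv
    have hm := Finset.mem_filter.mp hv
    obtain ⟨hex, hlen, _, _⟩ := badFacts v hm.1
    exact wt_zero_of_minp_one hex hm.2 (by omega)
  have hB2 : ∑ v ∈ (Bad.filter (fun v => ¬ minp v = 1)).filter (fun v => minp v = 2), wt v
      ≤ lam * (((SF ℓ n).filter NiceWord).card : ℝ) := by
    set B2 := (Bad.filter (fun v => ¬ minp v = 1)).filter (fun v => minp v = 2) with hB2d
    have memB2 : ∀ v ∈ B2, v ∈ Bad ∧ minp v = 2 := by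
      intro v hv
      rw [hB2d, Finset.mem_filter, Finset.mem_filter] at hv
      exact ⟨hv.1.1, hv.2⟩
    have key : ∀ v ∈ B2, wt v = lam ∧ v.dropLast ∈ (SF ℓ n).filter NiceWord := by
      intro v hv
      obtain ⟨hvB, h2⟩ := memB2 v hv
      obtain ⟨hex, hlen, hsfd, hresp⟩ := badFacts v hvB
      obtain ⟨a, b, hab, s, hs⟩ := minp_two_struct hex h2
      refine ⟨wt_lam_of_abab hab hs, ?_⟩
      rw [Finset.mem_filter]
      exact ⟨dropLast_mem_SF hlen hsfd hresp, nice_dropLast_of_abab hab hs⟩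
    have injB2 : ∀ v1 ∈ B2, ∀ v2 ∈ B2, v1.dropLast = v2.dropLast → v1 = v2 := by
      intro v1 hv1 v2 hv2 hd
      obtain ⟨hvB1, h21⟩ := memB2 v1 hv1
      obtain ⟨hvB2, h22⟩ := memB2 v2 hv2
      obtain ⟨hex1, _, _, _⟩ := badFacts v1 hvB1
      obtain ⟨hex2, _, _, _⟩ := badFacts v2 hvB2
      obtain ⟨a1, b1, hab1, s1, hs1⟩ := minp_two_struct hex1 h21
      obtain ⟨a2, b2, hab2, s2, hs2⟩ := minp_two_struct hex2 h22
      have l1 : last3 v1.dropLast = [a1, b1, a1] := last3_dropLast_of_abab hs1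
      have l2 : last3 v2.dropLast = [a2, b2, a2] := last3_dropLast_of_abab hs2
      rw [hd, l2] at l1
      have hb : b1 = b2 := by injection l1 with _ l1'; injection l1' with e _; exact e.symm
      have d1 : v1 = v1.dropLast ++ [b1] := by
        rw [hs1, List.dropLast_append_of_ne_nil (l := [a1, b1, a1, b1]) (by simp)]
        simp
      have d2 : v2 = v2.dropLast ++ [b2] := by
        rw [hs2, List.dropLast_append_of_ne_nil (l := [a2, b2, a2, b2]) (by simp)]
        simp
      rw [d1, d2, hd, hb]
    calc ∑ v ∈ B2, wt v = ∑ v ∈ B2, lam :=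
          Finset.sum_congr rfl (fun v hv => (key v hv).1)
      _ = (B2.card : ℝ) * lam := by rw [Finset.sum_const]; simp
      _ ≤ (((SF ℓ n).filter NiceWord).card : ℝ) * lam := by
          have hc : B2.card ≤ ((SF ℓ n).filter NiceWord).card :=
            Finset.card_le_card_of_injOn (fun v => v.dropLast)
              (fun v hv => (key v hv).2)
              (fun v1 hv1 v2 hv2 h => injB2 v1 hv1 v2 hv2 h)
          have : (B2.card : ℝ) ≤ (((SF ℓ n).filter NiceWord).card : ℝ) := by
            exact_mod_cast hc
          nlinarith [lam_nonneg]
      _ = lam * (((SF ℓ n).filter NiceWord).card : ℝ) := by ring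
  have hB3 : ∑ v ∈ (Bad.filter (fun v => ¬ minp v = 1)).filter (fun v => ¬ minp v = 2), wt v
      ≤ ∑ p ∈ Finset.Icc 3 (n+1), hat ℓ (n+1-p) := by
    set B3 := (Bad.filter (fun v => ¬ minp v = 1)).filter (fun v => ¬ minp v = 2) with hB3d
    have memB3 : ∀ v ∈ B3, v ∈ Bad ∧ minp v ≠ 1 ∧ minp v ≠ 2 := by
      intro v hv
      rw [hB3d, Finset.mem_filter, Finset.mem_filter] at hv
      exact ⟨hv.1.1, hv.1.2, hv.2⟩
    have mapsto : ∀ v ∈ B3, minp v ∈ Finset.Icc 3 (n+1) := by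
      intro v hv
      obtain ⟨hvB, hne1, hne2⟩ := memB3 v hv
      obtain ⟨hex, hlen, _, _⟩ := badFacts v hvB
      have h1 := minp_pos hex
      have h2 := minp_le_len hex
      rw [Finset.mem_Icc]
      omega
    rw [← Finset.sum_fiberwise_of_maps_to mapsto wt]
    apply Finset.sum_le_sum
    intro p hp
    have hp3 : 3 ≤ p := (Finset.mem_Icc.mp hp).1
    set Fp := B3.filter (fun v => minp v = p) with hFpd
    have hFp : ∀ v ∈ Fp, v.take (n+1-p) ∈ SF ℓ (n+1-p) ∧ wt v = wt (v.take (n+1-p)) ∧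
        v.take (n+1-p) ++ (v.take (n+1-p)).drop (n+1-2*p) = v := by
      intro v hv
      rw [hFpd, Finset.mem_filter] at hv
      obtain ⟨hvB3, hpv⟩ := hv
      obtain ⟨hvB, _, _⟩ := memB3 v hvB3
      obtain ⟨hex, hlen, hsfd, hresp⟩ := badFacts v hvB
      have hsq : SqAt v p := by rw [← hpv]; exact sqAt_minp hex
      have hst := sq_struct hsq
      rw [hlen] at hst
      have hple : 2 * p ≤ n + 1 := by
        obtain ⟨u, hul, _, husuf⟩ := hsq
        have := husuf.length_le
        simp [hul, hlen] at this
        omega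
      refine ⟨?_, (wt_congr (hst.2 hp3)).symm, hst.1⟩
      refine mem_SF.mpr ⟨by simp [hlen], ?_, respects_take ℓ hresp _⟩
      have htk : v.take (n+1-p) = v.dropLast.take (n+1-p) := by
        rw [List.dropLast_eq_take, List.take_take, hlen]
        congr 1
        omega
      rw [htk]
      exact sf_take hsfd _
    have injFp : ∀ v1 ∈ Fp, ∀ v2 ∈ Fp,
        v1.take (n+1-p) = v2.take (n+1-p) → v1 = v2 := by
      intro v1 hv1 v2 hv2 h
      have r1 := (hFp v1 hv1).2.2
      have r2 := (hFp v2 hv2).2.2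
      rw [← r1, ← r2, h]
    calc ∑ v ∈ Fp, wt v = ∑ v ∈ Fp, wt (v.take (n+1-p)) :=
          Finset.sum_congr rfl (fun v hv => (hFp v hv).2.1)
      _ = ∑ y ∈ Fp.image (fun v => v.take (n+1-p)), wt y :=
          (Finset.sum_image injFp).symm
      _ ≤ ∑ y ∈ SF ℓ (n+1-p), wt y := by
          apply Finset.sum_le_sum_of_subset_of_nonneg
          · intro y hy
            obtain ⟨v, hv, rfl⟩ := Finset.mem_image.mp hy
            exact (hFp v hv).1
          · intro y _ _
            exact wt_nonneg y
      _ = hat ℓ (n+1-p) := rfl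
  -- final algebra
  have hcard : ((SF ℓ n).card : ℝ) = (((SF ℓ n).filter PerfectWord).card : ℝ)
      + (((SF ℓ n).filter NiceWord).card : ℝ) := by
    exact_mod_cast card_PN hn
  have hhat := hat_PN ℓ n
  have s3 : Real.sqrt 3 ^ 2 = 3 := Real.sq_sqrt (by norm_num)
  set P := (((SF ℓ n).filter PerfectWord).card : ℝ)
  set N := (((SF ℓ n).filter NiceWord).card : ℝ)
  have hkey : (1 + Real.sqrt 3) * hat ℓ n = (2 + lam) * ((SF ℓ n).card : ℝ) - lam * N := by
    rw [hhat, hcard]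
    unfold lam
    linear_combination N * s3
  have hBadle : ∑ v ∈ Bad, wt v ≤ lam * N + ∑ p ∈ Finset.Icc 3 (n+1), hat ℓ (n+1-p) := by
    rw [← splitBad1, hB1, zero_add, ← splitBad2]
    linarith [hB2, hB3]
  linarith [sumG_ge, hsplit, hBadle, hkey.ge, hkey.le]

lemma hat_short (ℓ : ℕ → Finset ℕ) {m : ℕ} (hm : m < 3) : hat ℓ m = 0 := by
  apply Finset.sum_eq_zero
  intro w hw
  have hl := (mem_SF.mp hw).1
  exact wt_short (by omega)

theorem main_growth (ℓ : ℕ → Finset ℕ) (h4 : ∀ i, (ℓ i).card = 4)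
    (β : ℝ) (hβ : 1 < β)
    (hcond : 1 + Real.sqrt 3 - 1 / (β * (β - 1)) ≥ β) :
    ∀ n : ℕ, 3 ≤ n → β * hat ℓ n ≤ hat ℓ (n + 1) := by
  intro n
  induction n using Nat.strong_induction_on with
  | _ n IH =>
    intro hn
    have hβ0 : (0:ℝ) < β := by linarith
    have chain : ∀ d m : ℕ, 3 ≤ m → m + d ≤ n → β ^ d * hat ℓ m ≤ hat ℓ (m + d) := by
      intro d
      induction d with
      | zero => intro m _ _; simp
      | succ d ihd =>
        intro m hm3 hmd
        have h1 : β ^ d * hat ℓ m ≤ hat ℓ (m + d) := ihd m hm3 (by omega)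
        have h2 : β * hat ℓ (m + d) ≤ hat ℓ (m + d + 1) :=
          IH (m + d) (by omega) (by omega)
        calc β ^ (d+1) * hat ℓ m = β * (β ^ d * hat ℓ m) := by ring
          _ ≤ β * hat ℓ (m + d) := by nlinarith
          _ ≤ hat ℓ (m + d + 1) := h2
    have term_bound : ∀ p ∈ Finset.Icc 3 (n+1),
        hat ℓ (n+1-p) ≤ hat ℓ n * (1/β) ^ (p-1) := by
      intro p hp
      rw [Finset.mem_Icc] at hp
      rcases lt_or_ge (n+1-p) 3 with h | h
      · rw [hat_short ℓ h]
        exact mul_nonneg (hat_nonneg ℓ n) (by positivity)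
      · have hchain := chain (p-1) (n+1-p) h (by omega)
        have heq : n + 1 - p + (p - 1) = n := by omega
        rw [heq] at hchain
        have hpow : (0:ℝ) < β ^ (p-1) := pow_pos hβ0 _
        have hdiv : hat ℓ (n+1-p) ≤ hat ℓ n / β ^ (p-1) := by
          rw [le_div_iff₀ hpow]
          calc hat ℓ (n+1-p) * β ^ (p-1) = β ^ (p-1) * hat ℓ (n+1-p) := by ring
            _ ≤ hat ℓ n := hchain
        calc hat ℓ (n+1-p) ≤ hat ℓ n / β ^ (p-1) := hdiv
          _ = hat ℓ n * (1/β) ^ (p-1) := by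
              rw [one_div, inv_pow, div_eq_mul_inv]
    have sum_geom : ∑ p ∈ Finset.Icc 3 (n+1), ((1:ℝ)/β) ^ (p-1) ≤ 1/(β*(β-1)) := by
      set r : ℝ := 1/β with hr
      have hr0 : 0 ≤ r := by positivity
      have hr1 : r < 1 := by
        rw [hr, div_lt_one hβ0]; exact hβ
      have hico : Finset.Icc 3 (n+1) = Finset.Ico 3 (n+2) := (Finset.Ico_add_one_right_eq_Icc 3 (n+1)).symm
      rw [hico, Finset.sum_Ico_eq_sum_range]
      have hre : ∀ i ∈ Finset.range (n+2-3), r ^ (3 + i - 1) = r^2 * r^i := by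
        intro i _
        rw [show 3 + i - 1 = 2 + i from by omega, pow_add]
      rw [Finset.sum_congr rfl hre, ← Finset.mul_sum]
      have hgeo : ∑ i ∈ Finset.range (n+2-3), r ^ i ≤ 1 / (1 - r) := by
        have h := geom_sum_Ico_le_of_lt_one hr0 hr1 (m := 0) (n := n+2-3)
        rw [pow_zero] at h
        rw [Finset.range_eq_Ico]
        exact h
      have hfin : r^2 * (1/(1-r)) = 1/(β*(β-1)) := by
        rw [hr]
        have h1 : β ≠ 0 := ne_of_gt hβ0
        have h2 : β - 1 ≠ 0 := sub_ne_zero_of_ne (ne_of_gt hβ)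
        have h3 : (1:ℝ) - 1/β ≠ 0 := by
          field_simp
          exact div_ne_zero h2 h1
        field_simp
      calc r^2 * ∑ i ∈ Finset.range (n+2-3), r ^ i ≤ r^2 * (1/(1-r)) := by
            apply mul_le_mul_of_nonneg_left hgeo (by positivity)
        _ = 1/(β*(β-1)) := hfin
    have hsum : ∑ p ∈ Finset.Icc 3 (n+1), hat ℓ (n+1-p) ≤ hat ℓ n * (1/(β*(β-1))) := by
      calc ∑ p ∈ Finset.Icc 3 (n+1), hat ℓ (n+1-p)
          ≤ ∑ p ∈ Finset.Icc 3 (n+1), hat ℓ n * (1/β) ^ (p-1) :=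
            Finset.sum_le_sum term_bound
        _ = hat ℓ n * ∑ p ∈ Finset.Icc 3 (n+1), ((1:ℝ)/β) ^ (p-1) := by
            rw [Finset.mul_sum]
        _ ≤ hat ℓ n * (1/(β*(β-1))) :=
            mul_le_mul_of_nonneg_left sum_geom (hat_nonneg ℓ n)
    have hm := master ℓ h4 hn
    have hn0 := hat_nonneg ℓ n
    have key : β * hat ℓ n ≤ (1 + Real.sqrt 3 - 1/(β*(β-1))) * hat ℓ n :=
      mul_le_mul_of_nonneg_right hcond hn0
    have expand : (1 + Real.sqrt 3 - 1/(β*(β-1))) * hat ℓ n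
        = (1 + Real.sqrt 3) * hat ℓ n - hat ℓ n * (1/(β*(β-1))) := by ring
    linarith [key, expand.le, expand.ge, hm, hsum]

/-- For every 4-list assignment, if `β > 1` satisfies `1 + √3 - 1/(β(β-1)) ≥ β`,
then for every `n ≥ 3` the weighted count of square-free words of length `n + 1`
respecting the assignment is at least `β` times that for length `n`. -/
theorem stmt1 (ℓ : ℕ → Finset ℕ) (h4 : ∀ i, (ℓ i).card = 4)
    (β : ℝ) (hβ : 1 < β)
    (hcond : 1 + Real.sqrt 3 - 1 / (β * (β - 1)) ≥ β)
    (n : ℕ) (hn : 3 ≤ n) :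
    hatCount {w : List ℕ | w.length = n + 1 ∧ SquareFree w ∧ Respects ℓ w} ≥
      β * hatCount {w : List ℕ | w.length = n ∧ SquareFree w ∧ Respects ℓ w} := by
  rw [hat_eq_hatCount, hat_eq_hatCount]
  exact main_growth ℓ h4 β hβ hcond n hn
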